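/- In a left-cancellative monoid, if g1 f' is a right-lcm of f and g1, and g2 f'' is a right-lcm of f' and g2, then g1 g2 f'' is a right-lcm of f and g1 g2. -/
import Mathlib

/-- `h` is a right-lcm of `f` and `g`. -/
def IsRightLcm {M : Type*} [Monoid M] (f g h : M) : Prop :=
  (∃ z, f * z = h) ∧ (∃ z, g * z = h) ∧
    ∀ k, (∃ z, f * z = k) → (∃ z, g * z = k) → ∃ z, h * z = k

/-- In a left-cancellative monoid, if `g1 * f'` is a right-lcm of `f` and `g1`,
and `g2 * f''` is a right-lcm of `f'` and `g2`, then `g1 * g2 * f''` is a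
right-lcm of `f` and `g1 * g2`. -/
theorem rightLcm_iterated (M : Type*) [Monoid M]
    (hcancel : ∀ f g g' : M, f * g = f * g' → g = g')
    (f g1 g2 f' f'' : M)
    (h1 : IsRightLcm f g1 (g1 * f'))
    (h2 : IsRightLcm f' g2 (g2 * f'')) :
    IsRightLcm f (g1 * g2) (g1 * (g2 * f'')) := by
  obtain ⟨⟨z1, hz1⟩, -, hu1⟩ := h1
  obtain ⟨⟨z2, hz2⟩, -, hu2⟩ := h2
  refine ⟨⟨z1 * z2, ?_⟩, ⟨f'', by rw [mul_assoc]⟩, ?_⟩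
  · rw [← mul_assoc, hz1, mul_assoc, hz2]
  · rintro k ⟨a, ha⟩ ⟨b, hb⟩
    obtain ⟨z, hz⟩ := hu1 k ⟨a, ha⟩ ⟨g2 * b, by rw [← mul_assoc, hb]⟩
    have hz' : f' * z = g2 * b := hcancel g1 _ _ (by rw [← mul_assoc, hz, ← mul_assoc, hb])
    obtain ⟨w, hw⟩ := hu2 (f' * z) ⟨z, rfl⟩ ⟨b, hz'.symm⟩
    exact ⟨w, by rw [mul_assoc, hw, ← mul_assoc, hz]⟩
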